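/- (Theorem 1.) If a matching η is a local maximum of the social welfare with respect to swaps, i.e. Γ(η^{m↔m̃}) ≤ Γ(η) for every pair of distinct UEs m, m̃, then η is two-sided pairwise stable. -/

import Mathlib

open Finset

/-- The swap matching `η^{m ↔ m'}`: `m` and `m'` exchange serving nodes,
all other UEs keep their serving node. -/
def swapMatch {M P : Type*} [DecidableEq M] (η : M → P) (m m' : M) : M → P :=
  fun z => if z = m then η m' else if z = m' then η m else η z

/-- Utility of UE `x` under matching `η`: sum of pairwise utilities with the
UEs assigned to the same serving node. -/
def ueUtil {M P : Type*} [Fintype M] [DecidableEq P]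
    (u : M → M → ℝ) (η : M → P) (x : M) : ℝ :=
  ∑ z ∈ Finset.univ.filter (fun z => η z = η x), u z x

/-- Utility of SN `p` under matching `η`: sum of utilities of its associated UEs. -/
def snUtil {M P : Type*} [Fintype M] [DecidableEq P]
    (u : M → M → ℝ) (η : M → P) (p : P) : ℝ :=
  ∑ x ∈ Finset.univ.filter (fun x => η x = p), ueUtil u η x

/-- Social welfare: sum of utilities of all UEs. -/
def welfare {M P : Type*} [Fintype M] [DecidableEq P]
    (u : M → M → ℝ) (η : M → P) : ℝ :=
  ∑ x : M, ueUtil u η x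

/-- Two-sided pairwise stability: no pair of distinct UEs can swap so that all
four involved players weakly improve, with at least one strict improvement. -/
def TwoSidedStable {M P : Type*} [Fintype M] [DecidableEq M] [DecidableEq P]
    (u : M → M → ℝ) (η : M → P) : Prop :=
  ¬ ∃ m m' : M, m ≠ m' ∧
    ueUtil u (swapMatch η m m') m ≥ ueUtil u η m ∧
    ueUtil u (swapMatch η m m') m' ≥ ueUtil u η m' ∧
    snUtil u (swapMatch η m m') (η m) ≥ snUtil u η (η m) ∧
    snUtil u (swapMatch η m m') (η m') ≥ snUtil u η (η m') ∧
    (ueUtil u (swapMatch η m m') m > ueUtil u η m ∨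
     ueUtil u (swapMatch η m m') m' > ueUtil u η m' ∨
     snUtil u (swapMatch η m m') (η m) > snUtil u η (η m) ∨
     snUtil u (swapMatch η m m') (η m') > snUtil u η (η m'))

section Aux

variable {M P : Type*} [Fintype M] [DecidableEq M] [DecidableEq P]
  (u : M → M → ℝ) (η : M → P)

lemma ueUtil_eq (x : M) : ueUtil u η x = ∑ z, if η z = η x then u z x else 0 := by
  rw [ueUtil, Finset.sum_filter]

lemma snUtil_eq (p : P) : snUtil u η p = ∑ x, if η x = p then ueUtil u η x else 0 := by
  rw [snUtil, Finset.sum_filter]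

lemma swapMatch_eq_comp (m m' : M) :
    swapMatch η m m' = fun z => η (Equiv.swap m m' z) := by
  funext z
  simp only [swapMatch, Equiv.swap_apply_def]
  split_ifs <;> rfl

lemma swapMatch_comm (m m' : M) : swapMatch η m m' = swapMatch η m' m := by
  rw [swapMatch_eq_comp, swapMatch_eq_comp, Equiv.swap_comm]

lemma ueUtil_swap (m m' x : M) :
    ueUtil u (swapMatch η m m') x
      = ∑ z, if η z = η (Equiv.swap m m' x) then u (Equiv.swap m m' z) x else 0 := by
  set σ := Equiv.swap m m'
  rw [ueUtil_eq, swapMatch_eq_comp]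
  have h := Equiv.sum_comp σ (fun z => if η (σ z) = η (σ x) then u z x else 0)
  calc ∑ z, (if η (σ z) = η (σ x) then u z x else 0)
      = ∑ z, (if η (σ (σ z)) = η (σ x) then u (σ z) x else 0) := h.symm
    _ = ∑ z, (if η z = η (σ x) then u (σ z) x else 0) := by
        refine Finset.sum_congr rfl fun z _ => ?_
        rw [Equiv.swap_apply_self]

lemma ueUtil_swap_outside (m m' x : M) (hx1 : η x ≠ η m) (hx2 : η x ≠ η m') :
    ueUtil u (swapMatch η m m') x = ueUtil u η x := by
  have hxm : x ≠ m := fun h => hx1 (by rw [h])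
  have hxm' : x ≠ m' := fun h => hx2 (by rw [h])
  rw [ueUtil_swap, ueUtil_eq, Equiv.swap_apply_of_ne_of_ne hxm hxm']
  refine Finset.sum_congr rfl fun z _ => ?_
  by_cases hz : η z = η x
  · have hzm : z ≠ m := fun h => hx1 (by rw [← h, hz])
    have hzm' : z ≠ m' := fun h => hx2 (by rw [← h, hz])
    rw [Equiv.swap_apply_of_ne_of_ne hzm hzm']
  · simp [hz]

lemma snUtil_swap_diff (hsymm : ∀ z y, u z y = u y z) (hdiag : ∀ z, u z z = 0)
    (m m' : M) (hpq : η m ≠ η m') :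
    snUtil u (swapMatch η m m') (η m) - snUtil u η (η m)
      = 2 * (ueUtil u (swapMatch η m m') m' - ueUtil u η m) := by
  set σ := Equiv.swap m m' with hσ
  set η' := swapMatch η m m' with hη'
  have hmm' : m ≠ m' := fun h => hpq (by rw [h])
  -- f' := ueUtil u η' m'
  have hfm' : ueUtil u η' m'
      = ∑ z ∈ univ.erase m, (if η z = η m then u m' z else 0) := by
    rw [ueUtil_swap]
    rw [show Equiv.swap m m' m' = m from Equiv.swap_apply_right m m']
    rw [← Finset.add_sum_erase univ _ (mem_univ m)]
    rw [show Equiv.swap m m' m = m' from Equiv.swap_apply_left m m']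
    rw [if_pos rfl, hdiag, zero_add]
    refine Finset.sum_congr rfl fun z hz => ?_
    have hzm : z ≠ m := (Finset.mem_erase.mp hz).1
    by_cases h : η z = η m
    · have hzm' : z ≠ m' := fun hh => hpq (by rw [← hh, h])
      rw [if_pos h, if_pos h, Equiv.swap_apply_of_ne_of_ne hzm hzm', hsymm]
    · simp [h]
  have hfm : ueUtil u η m
      = ∑ z ∈ univ.erase m, (if η z = η m then u m z else 0) := by
    rw [ueUtil_eq, ← Finset.add_sum_erase univ _ (mem_univ m), if_pos rfl, hdiag, zero_add]
    refine Finset.sum_congr rfl fun z _ => ?_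
    by_cases h : η z = η m
    · rw [if_pos h, if_pos h, hsymm]
    · simp [h]
  -- snUtil under η' over p, reindexed by σ
  have h1 : snUtil u η' (η m) = ∑ x, if η x = η m then ueUtil u η' (σ x) else 0 := by
    rw [snUtil_eq]
    have hc : ∀ x, (if η' x = η m then ueUtil u η' x else 0)
        = (fun x => if η (σ x) = η m then ueUtil u η' x else 0) x := by
      intro x; rw [hη', swapMatch_eq_comp]
    rw [Finset.sum_congr rfl fun x _ => hc x]
    have h := Equiv.sum_comp σ (fun x => if η (σ x) = η m then ueUtil u η' x else 0)
    rw [← h]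
    refine Finset.sum_congr rfl fun x _ => ?_
    rw [Equiv.swap_apply_self]
  have h2 : snUtil u η' (η m) - snUtil u η (η m)
      = ∑ x, if η x = η m then ueUtil u η' (σ x) - ueUtil u η x else 0 := by
    rw [h1, snUtil_eq, ← Finset.sum_sub_distrib]
    refine Finset.sum_congr rfl fun x _ => ?_
    by_cases h : η x = η m <;> simp [h]
  rw [h2, ← Finset.add_sum_erase univ _ (mem_univ m), if_pos rfl,
    show σ m = m' from Equiv.swap_apply_left m m']
  have h3 : ∀ x ∈ univ.erase m,
      (if η x = η m then ueUtil u η' (σ x) - ueUtil u η x else 0)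
        = (if η x = η m then u m' x - u m x else 0) := by
    intro x hx
    have hxm : x ≠ m := (Finset.mem_erase.mp hx).1
    by_cases h : η x = η m
    · have hxm' : x ≠ m' := fun hh => hpq (by rw [← hh, h])
      rw [if_pos h, if_pos h, show σ x = x from Equiv.swap_apply_of_ne_of_ne hxm hxm']
      have hx' : ueUtil u η' x = ∑ z, if η z = η m then u (σ z) x else 0 := by
        rw [hη', ueUtil_swap, show Equiv.swap m m' x = x from
          Equiv.swap_apply_of_ne_of_ne hxm hxm', h]
      rw [hx', ueUtil_eq, h, ← Finset.sum_sub_distrib]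
      rw [Finset.sum_eq_single m]
      · simp [show σ m = m' from Equiv.swap_apply_left m m']
      · intro z _ hzm
        by_cases hz : η z = η m
        · have hzm' : z ≠ m' := fun hh => hpq (by rw [← hh, hz])
          simp [hz, hσ, Equiv.swap_apply_of_ne_of_ne hzm hzm']
        · simp [hz]
      · intro h; exact absurd (mem_univ m) h
    · simp [h]
  rw [Finset.sum_congr rfl h3]
  have h4 : ∑ x ∈ univ.erase m, (if η x = η m then u m' x - u m x else 0)
      = ueUtil u η' m' - ueUtil u η m := by
    rw [hfm', hfm, ← Finset.sum_sub_distrib]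
    refine Finset.sum_congr rfl fun x _ => ?_
    by_cases h : η x = η m <;> simp [h]
  rw [h4]; ring

lemma welfare_decomp (p p' : P) (hp : p ≠ p') :
    welfare u η = snUtil u η p + snUtil u η p'
      + ∑ x, if η x ≠ p ∧ η x ≠ p' then ueUtil u η x else 0 := by
  rw [welfare, snUtil_eq, snUtil_eq, ← Finset.sum_add_distrib, ← Finset.sum_add_distrib]
  refine Finset.sum_congr rfl fun x _ => ?_
  by_cases h1 : η x = p
  · have h2 : η x ≠ p' := fun h => hp (h1 ▸ h)
    simp [h1, h2, hp]
  · by_cases h2 : η x = p'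
    · simp [h1, h2, Ne.symm hp]
    · simp [h1, h2]

lemma welfare_swap_diff (m m' : M) (hpq : η m ≠ η m') :
    welfare u (swapMatch η m m') - welfare u η
      = (snUtil u (swapMatch η m m') (η m) - snUtil u η (η m))
        + (snUtil u (swapMatch η m m') (η m') - snUtil u η (η m')) := by
  set η' := swapMatch η m m' with hη'
  have hmm' : m ≠ m' := fun h => hpq (by rw [h])
  have hrest : (∑ x, if η' x ≠ η m ∧ η' x ≠ η m' then ueUtil u η' x else 0)
      = ∑ x, if η x ≠ η m ∧ η x ≠ η m' then ueUtil u η x else 0 := by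
    refine Finset.sum_congr rfl fun x _ => ?_
    by_cases hx : x = m
    · subst hx
      have : η' x = η m' := by simp [hη', swapMatch]
      simp [this, hpq]
    · by_cases hx' : x = m'
      · subst hx'
        have : η' x = η m := by simp [hη', swapMatch, hmm'.symm]
        simp [this]
      · have hval : η' x = η x := by simp [hη', swapMatch, hx, hx']
        rw [hval]
        by_cases hc : η x ≠ η m ∧ η x ≠ η m'
        · rw [if_pos hc, if_pos hc, ueUtil_swap_outside u η m m' x hc.1 hc.2]
        · rw [if_neg hc, if_neg hc]
  rw [welfare_decomp u η' (η m) (η m') hpq, welfare_decomp u η (η m) (η m') hpq, hrest]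
  ring

end Aux

/-- Theorem 1: all local maxima of the social welfare with respect
to swaps are two-sided pairwise stable. -/
theorem localMax_twoSidedStable {M P : Type*} [Fintype M] [DecidableEq M] [DecidableEq P]
    (u : M → M → ℝ) (hsymm : ∀ z y, u z y = u y z) (hdiag : ∀ z, u z z = 0)
    (η : M → P)
    (hmax : ∀ m m' : M, m ≠ m' → welfare u (swapMatch η m m') ≤ welfare u η) :
    TwoSidedStable u η := by
  rintro ⟨m, m', hne, h1, h2, h3, h4, hstrict⟩
  by_cases hpq : η m = η m'
  · have heq : swapMatch η m m' = η := by
      funext z; simp only [swapMatch]; split_ifs with a b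
      · rw [a, hpq]
      · rw [b, hpq]
      · rfl
    rw [heq] at hstrict
    rcases hstrict with h | h | h | h <;> exact lt_irrefl _ h
  · have g1 := snUtil_swap_diff u η hsymm hdiag m m' hpq
    have g2 := snUtil_swap_diff u η hsymm hdiag m' m (Ne.symm hpq)
    rw [swapMatch_comm η m' m] at g2
    have w := welfare_swap_diff u η m m' hpq
    have hw := hmax m m' hne
    rcases hstrict with h | h | h | h <;> linarith
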